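/- Let k be a field, q ∈ k^×, and θ : O_q(M_{m,n}(k)) → O_q(k^m) ⊗_k O_q(k^n) the k-algebra homomorphism with θ(X_{ij}) = y_i ⊗ z_j. Then the kernel of θ is exactly the ideal I_1 generated by the 2×2 quantum minors. -/

import Mathlib

open scoped TensorProduct

noncomputable section

/-- Defining relations of the coordinate ring `O_q(k^n)` of quantum affine `n`-space:
`y_i y_j = q y_j y_i` for `i < j`. -/
inductive AffRel (k : Type) [Field k] (q : k) (n : ℕ) :
    FreeAlgebra k (Fin n) → FreeAlgebra k (Fin n) → Prop
  | rel : ∀ {i j : Fin n}, i < j →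
      AffRel k q n (FreeAlgebra.ι k i * FreeAlgebra.ι k j)
        (q • (FreeAlgebra.ι k j * FreeAlgebra.ι k i))

/-- The coordinate ring `O_q(k^n)` of quantum affine `n`-space. -/
abbrev QAff (k : Type) [Field k] (q : k) (n : ℕ) : Type := RingQuot (AffRel k q n)

/-- The canonical generators `y_1, …, y_n` of `O_q(k^n)`. -/
def affGen (k : Type) [Field k] (q : k) (n : ℕ) (i : Fin n) : QAff k q n :=
  RingQuot.mkAlgHom k (AffRel k q n) (FreeAlgebra.ι k i)

/-- Defining relations of the coordinate ring `O_q(M_{m,n}(k))` of quantum `m × n` matrices. -/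
inductive MatRel (k : Type) [Field k] (q : k) (m n : ℕ) :
    FreeAlgebra k (Fin m × Fin n) → FreeAlgebra k (Fin m × Fin n) → Prop
  | col : ∀ {i l : Fin m} {j : Fin n}, i < l →
      MatRel k q m n (FreeAlgebra.ι k (i, j) * FreeAlgebra.ι k (l, j))
        (q • (FreeAlgebra.ι k (l, j) * FreeAlgebra.ι k (i, j)))
  | row : ∀ {i : Fin m} {j s : Fin n}, j < s →
      MatRel k q m n (FreeAlgebra.ι k (i, j) * FreeAlgebra.ι k (i, s))
        (q • (FreeAlgebra.ι k (i, s) * FreeAlgebra.ι k (i, j)))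
  | comm : ∀ {i l : Fin m} {j s : Fin n}, i < l → j < s →
      MatRel k q m n (FreeAlgebra.ι k (i, s) * FreeAlgebra.ι k (l, j))
        (FreeAlgebra.ι k (l, j) * FreeAlgebra.ι k (i, s))
  | mixed : ∀ {i l : Fin m} {j s : Fin n}, i < l → j < s →
      MatRel k q m n
        (FreeAlgebra.ι k (i, j) * FreeAlgebra.ι k (l, s) -
          FreeAlgebra.ι k (l, s) * FreeAlgebra.ι k (i, j))
        ((q - q⁻¹) • (FreeAlgebra.ι k (i, s) * FreeAlgebra.ι k (l, j)))

/-- The coordinate ring `O_q(M_{m,n}(k))` of quantum `m × n` matrices. -/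
abbrev QMat (k : Type) [Field k] (q : k) (m n : ℕ) : Type := RingQuot (MatRel k q m n)

/-- The canonical generators `X i j` of `O_q(M_{m,n}(k))`. -/
def X (k : Type) [Field k] (q : k) (m n : ℕ) (i : Fin m) (j : Fin n) : QMat k q m n :=
  RingQuot.mkAlgHom k (MatRel k q m n) (FreeAlgebra.ι k (i, j))

/-- The two-sided ideal `I₁` of `O_q(M_{m,n}(k))` generated by the `2 × 2` quantum minors
`X_{ij} X_{ls} - q X_{is} X_{lj}` for `i < l`, `j < s`. -/
def I₁ (k : Type) [Field k] (q : k) (m n : ℕ) : TwoSidedIdeal (QMat k q m n) :=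
  TwoSidedIdeal.span
    { a | ∃ (i l : Fin m) (j s : Fin n), i < l ∧ j < s ∧
        a = X k q m n i j * X k q m n l s - q • (X k q m n i s * X k q m n l j) }

/-- The monomial `X_{i₁j₁} X_{i₂j₂} ⋯ X_{iₗjₗ}` associated to a list of index pairs. -/
def matMono (k : Type) [Field k] (q : k) (m n : ℕ) (L : List (Fin m × Fin n)) :
    QMat k q m n :=
  (L.map fun p => X k q m n p.1 p.2).prod

/-- A list of index pairs is *ordered* if the row indices are non-increasing and the column
indices are non-decreasing, i.e. `i₁ ≥ i₂ ≥ ⋯ ≥ iₗ` and `j₁ ≤ j₂ ≤ ⋯ ≤ jₗ`. -/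
def OrderedIdx {m n : ℕ} (L : List (Fin m × Fin n)) : Prop :=
  L.Chain' fun p p' => p'.1 ≤ p.1 ∧ p.2 ≤ p'.2

section AuxRep

variable {k : Type} [Field k] {q : k} {m n : ℕ}

/-- Scaling operator: `X j ↦ q X j` for `j > i`. -/
def sOp (q : k) {n : ℕ} (i : Fin n) :
    MvPolynomial (Fin n) k →ₐ[k] MvPolynomial (Fin n) k :=
  MvPolynomial.aeval fun j =>
    if i < j then MvPolynomial.C q * MvPolynomial.X j else MvPolynomial.X j

lemma sOp_monomial (hq : q ≠ 0) (i : Fin n) (d : Fin n →₀ ℕ) :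
    ∃ c : k, c ≠ 0 ∧
      sOp q i (MvPolynomial.monomial d (1 : k)) = c • MvPolynomial.monomial d 1 := by
  refine ⟨∏ j ∈ d.support, (if i < j then q else 1) ^ d j, ?_, ?_⟩
  · exact Finset.prod_ne_zero_iff.2 fun j _ => pow_ne_zero _ (by split <;> simp [hq])
  · have h1 : ∀ (j : Fin n) (e : ℕ),
        ((if i < j then MvPolynomial.C q * MvPolynomial.X j else MvPolynomial.X j) :
          MvPolynomial (Fin n) k) ^ e
        = MvPolynomial.C ((if i < j then q else 1) ^ e) * MvPolynomial.X j ^ e := by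
      intro j e; split <;> simp [mul_pow]
    rw [sOp, MvPolynomial.aeval_monomial, Finsupp.prod]
    simp only [h1]
    rw [Finset.prod_mul_distrib, ← map_prod, MvPolynomial.smul_eq_C_mul,
      MvPolynomial.monomial_eq, Finsupp.prod]
    simp

/-- Multiplication-by-`X i` composed with scaling: the image of `y_i`. -/
def mOp (q : k) {n : ℕ} (i : Fin n) : Module.End k (MvPolynomial (Fin n) k) :=
  (LinearMap.mulLeft k (MvPolynomial.X i)) ∘ₗ (sOp q i).toLinearMap

lemma mOp_apply (i : Fin n) (p : MvPolynomial (Fin n) k) :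
    mOp q i p = MvPolynomial.X i * sOp q i p := rfl

lemma sOp_comm (i j t : Fin n) :
    sOp q i (sOp q j (MvPolynomial.X t)) = sOp q j (sOp q i (MvPolynomial.X t)) := by
  by_cases hjt : j < t <;> by_cases hit : i < t <;>
    simp [sOp, hjt, hit]

lemma sOp_sOp (i j : Fin n) (p : MvPolynomial (Fin n) k) :
    sOp q i (sOp q j p) = sOp q j (sOp q i p) := by
  have : ((sOp q i).comp (sOp q j) : MvPolynomial (Fin n) k →ₐ[k] _) =
      (sOp q j).comp (sOp q i) := by
    apply MvPolynomial.algHom_ext; intro t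
    simpa using sOp_comm i j t
  exact congrArg (fun f => (f : MvPolynomial (Fin n) k →ₐ[k] _) p) this

lemma mOp_rel {i j : Fin n} (hij : i < j) :
    mOp (n := n) (k := k) q i * mOp q j = q • (mOp q j * mOp q i) := by
  apply LinearMap.ext; intro p
  have h1 : sOp q i (MvPolynomial.X j) = MvPolynomial.C q * MvPolynomial.X j := by
    simp [sOp, hij]
  have h2 : sOp q j (MvPolynomial.X i) = MvPolynomial.X i := by
    simp [sOp, not_lt_of_gt hij]
  show mOp q i (mOp q j p) = q • mOp q j (mOp q i p)
  rw [mOp_apply, mOp_apply, mOp_apply, mOp_apply, map_mul, map_mul, h1, h2,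
    sOp_sOp i j p]
  rw [MvPolynomial.smul_eq_C_mul]
  ring

end AuxRep
section AuxRep2

variable {k : Type} [Field k] {q : k} {m n : ℕ}

/-- The representation of `O_q(k^n)` on polynomials. -/
def affRep (k : Type) [Field k] (q : k) (n : ℕ) :
    QAff k q n →ₐ[k] Module.End k (MvPolynomial (Fin n) k) :=
  RingQuot.liftAlgHom k ⟨FreeAlgebra.lift k (mOp q), by
    rintro x y ⟨h⟩
    simp only [map_mul, map_smul, FreeAlgebra.lift_ι_apply]
    exact mOp_rel h⟩

lemma affRep_gen (i : Fin n) : affRep k q n (affGen k q n i) = mOp q i := by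
  rw [affGen, affRep, RingQuot.liftAlgHom_mkAlgHom_apply]
  simp [FreeAlgebra.lift_ι_apply]

/-- The monomial `y_{i₁} ⋯ y_{iₗ}` in `O_q(k^n)`. -/
def yL (k : Type) [Field k] (q : k) (n : ℕ) (r : List (Fin n)) : QAff k q n :=
  (r.map (affGen k q n)).prod

/-- The exponent vector of a list of indices. -/
def cnt {n : ℕ} (r : List (Fin n)) : Fin n →₀ ℕ :=
  (r.map fun i => Finsupp.single i 1).sum

lemma cnt_nil : cnt ([] : List (Fin n)) = 0 := rfl

lemma cnt_cons (i : Fin n) (r : List (Fin n)) : cnt (i :: r) = Finsupp.single i 1 + cnt r := by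
  simp [cnt]

lemma affRep_yL (hq : q ≠ 0) (r : List (Fin n)) :
    ∃ c : k, c ≠ 0 ∧
      (affRep k q n (yL k q n r)) 1 = c • MvPolynomial.monomial (cnt r) 1 := by
  induction r with
  | nil =>
    refine ⟨1, one_ne_zero, ?_⟩
    simp [yL, cnt_nil, MvPolynomial.monomial_zero', Module.End.one_apply]
  | cons i r ih =>
    obtain ⟨c, hc, hval⟩ := ih
    obtain ⟨c', hc', hval'⟩ := sOp_monomial hq i (cnt r)
    refine ⟨c * c', mul_ne_zero hc hc', ?_⟩
    have hy : yL k q n (i :: r) = affGen k q n i * yL k q n r := by simp [yL]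
    rw [hy, map_mul, Module.End.mul_apply, hval, affRep_gen, map_smul, mOp_apply, hval',
      cnt_cons]
    rw [mul_smul_comm, smul_smul]
    congr 1
    rw [MvPolynomial.X, MvPolynomial.monomial_mul, one_mul]

lemma cnt_count (r : List (Fin n)) (a : Fin n) : cnt r a = r.count a := by
  induction r with
  | nil => simp [cnt_nil]
  | cons i r ih =>
    rw [cnt_cons, List.count_cons, Finsupp.add_apply, ih, Finsupp.single_apply]
    by_cases h : i = a
    · subst h; simp [add_comm]
    · simp [h, Ne.symm h]

lemma sorted_eq_of_cnt_eq {r r' : List (Fin n)} (hr : r.Chain' (· ≥ ·))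
    (hr' : r'.Chain' (· ≥ ·)) (h : cnt r = cnt r') : r = r' := by
  have hperm : r.Perm r' := by
    rw [← Multiset.coe_eq_coe]
    apply Multiset.ext.2
    intro a
    have := DFunLike.congr_fun h a
    simpa [cnt_count, Multiset.coe_count] using this
  exact List.Perm.eq_of_pairwise (fun a b _ _ h1 h2 => le_antisymm h2 h1)
    (List.isChain_iff_pairwise.1 hr) (List.isChain_iff_pairwise.1 hr') hperm

lemma sorted_eq_of_cnt_eq' {r r' : List (Fin n)} (hr : r.Chain' (· ≤ ·))
    (hr' : r'.Chain' (· ≤ ·)) (h : cnt r = cnt r') : r = r' := by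
  have hperm : r.Perm r' := by
    rw [← Multiset.coe_eq_coe]
    apply Multiset.ext.2
    intro a
    have := DFunLike.congr_fun h a
    simpa [cnt_count, Multiset.coe_count] using this
  exact List.Perm.eq_of_pairwise (fun a b _ _ h1 h2 => le_antisymm h1 h2)
    (List.isChain_iff_pairwise.1 hr) (List.isChain_iff_pairwise.1 hr') hperm

end AuxRep2
section AuxTensor

variable {k : Type} [Field k] {q : k} {m n : ℕ}

/-- The evaluation map `O_q(k^m) ⊗ O_q(k^n) → k[x] ⊗ k[x]`, `a ⊗ b ↦ (ρ a)(1) ⊗ (ρ b)(1)`. -/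
def psi (k : Type) [Field k] (q : k) (m n : ℕ) :
    (QAff k q m ⊗[k] QAff k q n) →ₗ[k]
      (MvPolynomial (Fin m) k ⊗[k] MvPolynomial (Fin n) k) :=
  TensorProduct.lift (LinearMap.mk₂ k
    (fun a b => (affRep k q m a 1) ⊗ₜ[k] (affRep k q n b 1))
    (by intros; simp [map_add, LinearMap.add_apply, TensorProduct.add_tmul])
    (by intros; simp [map_smul, LinearMap.smul_apply, TensorProduct.smul_tmul'])
    (by intros; simp [map_add, LinearMap.add_apply, TensorProduct.tmul_add])
    (by intros; simp [map_smul, LinearMap.smul_apply, TensorProduct.tmul_smul]))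

lemma psi_tmul (a : QAff k q m) (b : QAff k q n) :
    psi k q m n (a ⊗ₜ[k] b) = (affRep k q m a 1) ⊗ₜ[k] (affRep k q n b 1) := by
  simp [psi]
  rfl

lemma theta_matMono (θ : QMat k q m n →ₐ[k] QAff k q m ⊗[k] QAff k q n)
    (hθ : ∀ (i : Fin m) (j : Fin n),
      θ (X k q m n i j) = affGen k q m i ⊗ₜ[k] affGen k q n j)
    (L : List (Fin m × Fin n)) :
    θ (matMono k q m n L) = yL k q m (L.map Prod.fst) ⊗ₜ[k] yL k q n (L.map Prod.snd) := by
  induction L with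
  | nil =>
    simp only [matMono, List.map_nil, List.prod_nil, map_one, yL]
    exact Algebra.TensorProduct.one_def ..
  | cons p L ih =>
    have : matMono k q m n (p :: L) = X k q m n p.1 p.2 * matMono k q m n L := by
      simp [matMono]
    rw [this, map_mul, ih, hθ]
    simp only [List.map_cons, yL, List.prod_cons]
    rw [Algebra.TensorProduct.tmul_mul_tmul]

lemma eq_of_map_eq {α β : Type} {L L' : List (α × β)}
    (h1 : L.map Prod.fst = L'.map Prod.fst) (h2 : L.map Prod.snd = L'.map Prod.snd) :
    L = L' := by
  induction L generalizing L' with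
  | nil => cases L' <;> simp_all
  | cons p L ih =>
    cases L' with
    | nil => simp_all
    | cons p' L'' =>
      simp only [List.map_cons, List.cons.injEq] at h1 h2
      rw [ih h1.2 h2.2, Prod.ext h1.1 h2.1]

/-- Subtype of ordered index lists. -/
def idxMap {m n : ℕ} (L : {L : List (Fin m × Fin n) // OrderedIdx L}) :
    (Fin m →₀ ℕ) × (Fin n →₀ ℕ) :=
  (cnt (L.1.map Prod.fst), cnt (L.1.map Prod.snd))

lemma idxMap_inj {m n : ℕ} : Function.Injective (idxMap (m := m) (n := n)) := by
  rintro ⟨L, hL⟩ ⟨L', hL'⟩ h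
  simp only [idxMap, Prod.mk.injEq] at h
  have hr : (L.map Prod.fst).Chain' (· ≥ ·) :=
    (List.isChain_map Prod.fst).2 (List.IsChain.imp (fun a b hab => hab.1) hL)
  have hr' : (L'.map Prod.fst).Chain' (· ≥ ·) :=
    (List.isChain_map Prod.fst).2 (List.IsChain.imp (fun a b hab => hab.1) hL')
  have hcc : (L.map Prod.snd).Chain' (· ≤ ·) :=
    (List.isChain_map Prod.snd).2 (List.IsChain.imp (fun a b hab => hab.2) hL)
  have hcc' : (L'.map Prod.snd).Chain' (· ≤ ·) :=
    (List.isChain_map Prod.snd).2 (List.IsChain.imp (fun a b hab => hab.2) hL')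
  exact Subtype.ext (eq_of_map_eq (sorted_eq_of_cnt_eq hr hr' h.1)
    (sorted_eq_of_cnt_eq' hcc hcc' h.2))

lemma indep_ordered (hq : q ≠ 0)
    (θ : QMat k q m n →ₐ[k] QAff k q m ⊗[k] QAff k q n)
    (hθ : ∀ (i : Fin m) (j : Fin n),
      θ (X k q m n i j) = affGen k q m i ⊗ₜ[k] affGen k q n j) :
    LinearIndependent k
      (fun L : {L : List (Fin m × Fin n) // OrderedIdx L} => θ (matMono k q m n L.1)) := by
  apply LinearIndependent.of_comp (psi k q m n)
  choose c1 hc1 hv1 using fun L : {L : List (Fin m × Fin n) // OrderedIdx L} =>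
    affRep_yL (q := q) hq (L.1.map Prod.fst)
  choose c2 hc2 hv2 using fun L : {L : List (Fin m × Fin n) // OrderedIdx L} =>
    affRep_yL (q := q) hq (L.1.map Prod.snd)
  set B := (MvPolynomial.basisMonomials (Fin m) k).tensorProduct
    (MvPolynomial.basisMonomials (Fin n) k) with hB
  have key : (⇑(psi k q m n) ∘ fun L : {L : List (Fin m × Fin n) // OrderedIdx L} =>
      θ (matMono k q m n L.1)) =
      (fun L => Units.mk0 (c1 L * c2 L) (mul_ne_zero (hc1 L) (hc2 L))) • fun L => B (idxMap L) := by
    funext L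
    simp only [Function.comp_apply, Pi.smul_apply', Pi.smul_apply]
    rw [theta_matMono θ hθ, psi_tmul, hv1, hv2]
    rw [TensorProduct.tmul_smul, TensorProduct.smul_tmul', smul_smul]
    rw [hB, Units.smul_def, Module.Basis.tensorProduct_apply']
    simp only [MvPolynomial.coe_basisMonomials, Units.val_mk0, idxMap]
    rw [mul_comm, TensorProduct.smul_tmul']
  rw [key]
  exact (B.linearIndependent.comp idxMap idxMap_inj).units_smul _

end AuxTensor
section AuxComb

variable {m n : ℕ}

/-- Number of row inversions (pairs `p < r` with `i_p < i_r`). -/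
def rowInv : List (Fin m × Fin n) → ℕ
  | [] => 0
  | p :: l => l.countP (fun p' => decide (p.1 < p'.1)) + rowInv l

/-- Number of column inversions (pairs `p < r` with `j_p > j_r`). -/
def colInv : List (Fin m × Fin n) → ℕ
  | [] => 0
  | p :: l => l.countP (fun p' => decide (p'.2 < p.2)) + colInv l

lemma rowInv_cons (p : Fin m × Fin n) (l : List (Fin m × Fin n)) :
    rowInv (p :: l) = l.countP (fun p' => decide (p.1 < p'.1)) + rowInv l := rfl

lemma colInv_cons (p : Fin m × Fin n) (l : List (Fin m × Fin n)) :
    colInv (p :: l) = l.countP (fun p' => decide (p'.2 < p.2)) + colInv l := rfl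

lemma rowInv_append (P M : List (Fin m × Fin n)) :
    rowInv (P ++ M) = rowInv P +
      (P.map fun x => M.countP (fun y => decide (x.1 < y.1))).sum + rowInv M := by
  induction P with
  | nil => simp [rowInv]
  | cons x P ih =>
    rw [List.cons_append, rowInv_cons, rowInv_cons, List.countP_append, ih, List.map_cons,
      List.sum_cons]
    omega

lemma colInv_append (P M : List (Fin m × Fin n)) :
    colInv (P ++ M) = colInv P +
      (P.map fun x => M.countP (fun y => decide (y.2 < x.2))).sum + colInv M := by
  induction P with
  | nil => simp [colInv]
  | cons x P ih =>
    rw [List.cons_append, colInv_cons, colInv_cons, List.countP_append, ih, List.map_cons,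
      List.sum_cons]
    omega

lemma mu_lt (P S : List (Fin m × Fin n)) (u v u₂ v₂ : Fin m × Fin n)
    (hr : (u₂.1 = u.1 ∧ v₂.1 = v.1) ∨ (u₂.1 = v.1 ∧ v₂.1 = u.1))
    (hc : (u₂.2 = u.2 ∧ v₂.2 = v.2) ∨ (u₂.2 = v.2 ∧ v₂.2 = u.2))
    (hind : (if u₂.1 < v₂.1 then 1 else 0) + (if v₂.2 < u₂.2 then 1 else 0) <
      (if u.1 < v.1 then 1 else 0) + ((if v.2 < u.2 then 1 else 0) : ℕ)) :
    rowInv (P ++ u₂ :: v₂ :: S) + colInv (P ++ u₂ :: v₂ :: S) <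
      rowInv (P ++ u :: v :: S) + colInv (P ++ u :: v :: S) := by
  rw [rowInv_append, rowInv_append, colInv_append, colInv_append]
  have hrow2 : ∀ (a b : Fin m × Fin n),
      ((a.1 = u.1 ∧ b.1 = v.1) ∨ (a.1 = v.1 ∧ b.1 = u.1)) →
      (P.map fun x => (a :: b :: S).countP (fun y => decide (x.1 < y.1))).sum =
      (P.map fun x => (u :: v :: S).countP (fun y => decide (x.1 < y.1))).sum := by
    intro a b hab
    apply congrArg
    apply List.map_congr_left
    intro x _
    simp only [List.countP_cons]
    rcases hab with ⟨h1, h2⟩ | ⟨h1, h2⟩ <;> simp only [h1, h2] <;> omega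
  have hcol2 : ∀ (a b : Fin m × Fin n),
      ((a.2 = u.2 ∧ b.2 = v.2) ∨ (a.2 = v.2 ∧ b.2 = u.2)) →
      (P.map fun x => (a :: b :: S).countP (fun y => decide (y.2 < x.2))).sum =
      (P.map fun x => (u :: v :: S).countP (fun y => decide (y.2 < x.2))).sum := by
    intro a b hab
    apply congrArg
    apply List.map_congr_left
    intro x _
    simp only [List.countP_cons]
    rcases hab with ⟨h1, h2⟩ | ⟨h1, h2⟩ <;> simp only [h1, h2] <;> omega
  rw [hrow2 u₂ v₂ hr, hcol2 u₂ v₂ hc]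
  have hrS : ∀ (a b : Fin m × Fin n),
      ((a.1 = u.1 ∧ b.1 = v.1) ∨ (a.1 = v.1 ∧ b.1 = u.1)) →
      S.countP (fun p' => decide (a.1 < p'.1)) + S.countP (fun p' => decide (b.1 < p'.1)) =
      S.countP (fun p' => decide (u.1 < p'.1)) + S.countP (fun p' => decide (v.1 < p'.1)) := by
    intro a b hab
    rcases hab with ⟨h1, h2⟩ | ⟨h1, h2⟩ <;> rw [h1, h2] <;> omega
  have hcS : ∀ (a b : Fin m × Fin n),
      ((a.2 = u.2 ∧ b.2 = v.2) ∨ (a.2 = v.2 ∧ b.2 = u.2)) →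
      S.countP (fun p' => decide (p'.2 < a.2)) + S.countP (fun p' => decide (p'.2 < b.2)) =
      S.countP (fun p' => decide (p'.2 < u.2)) + S.countP (fun p' => decide (p'.2 < v.2)) := by
    intro a b hab
    rcases hab with ⟨h1, h2⟩ | ⟨h1, h2⟩ <;> rw [h1, h2] <;> omega
  have e1 := hrS u₂ v₂ hr
  have e2 := hcS u₂ v₂ hc
  simp only [rowInv_cons, colInv_cons, List.countP_cons]
  have hu2v2r : (if decide (u₂.1 < v₂.1) = true then 1 else 0) = (if u₂.1 < v₂.1 then 1 else 0) := by
    simp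
  simp only [decide_eq_true_eq]
  omega

lemma exists_bad {α : Type} {R : α → α → Prop} :
    ∀ {L : List α}, ¬ L.Chain' R → ∃ P u v S, L = P ++ u :: v :: S ∧ ¬ R u v := by
  intro L h
  induction L with
  | nil => exact absurd List.isChain_nil h
  | cons x l ih =>
    cases l with
    | nil => exact absurd (List.isChain_singleton x) h
    | cons y l' =>
      simp only [List.Chain', List.isChain_cons_cons] at h
      by_cases hxy : R x y
      · obtain ⟨P, u, v, S, heq, hbad⟩ := ih (fun hc => h ⟨hxy, hc⟩)
        exact ⟨x :: P, u, v, S, by rw [List.cons_append, heq], hbad⟩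
      · exact ⟨[], x, y, l', rfl, hxy⟩

end AuxComb
section AuxRel

variable {k : Type} [Field k] {q : k} {m n : ℕ}

lemma Xcol {i l : Fin m} (j : Fin n) (h : i < l) :
    X k q m n i j * X k q m n l j = q • (X k q m n l j * X k q m n i j) := by
  have h' := RingQuot.mkAlgHom_rel k (MatRel.col (k := k) (q := q) (j := j) h)
  rw [map_mul, map_smul, map_mul] at h'
  exact h'

lemma Xrow (i : Fin m) {j s : Fin n} (h : j < s) :
    X k q m n i j * X k q m n i s = q • (X k q m n i s * X k q m n i j) := by
  have h' := RingQuot.mkAlgHom_rel k (MatRel.row (k := k) (q := q) (i := i) h)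
  rw [map_mul, map_smul, map_mul] at h'
  exact h'

lemma Xcomm {i l : Fin m} {j s : Fin n} (hi : i < l) (hj : j < s) :
    X k q m n i s * X k q m n l j = X k q m n l j * X k q m n i s := by
  have h' := RingQuot.mkAlgHom_rel k (MatRel.comm (k := k) (q := q) hi hj)
  rw [map_mul, map_mul] at h'
  exact h'

lemma Xmixed {i l : Fin m} {j s : Fin n} (hi : i < l) (hj : j < s) :
    X k q m n i j * X k q m n l s - X k q m n l s * X k q m n i j =
      (q - q⁻¹) • (X k q m n i s * X k q m n l j) := by
  have h' := RingQuot.mkAlgHom_rel k (MatRel.mixed (k := k) (q := q) hi hj)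
  rw [map_sub, map_mul, map_mul, map_smul, map_mul] at h'
  exact h'

lemma minor_mem {i l : Fin m} {j s : Fin n} (hi : i < l) (hj : j < s) :
    X k q m n i j * X k q m n l s - q • (X k q m n i s * X k q m n l j) ∈ I₁ k q m n :=
  TwoSidedIdeal.subset_span ⟨i, l, j, s, hi, hj, rfl⟩

lemma step (hq : q ≠ 0) (u v : Fin m × Fin n) (hbad : ¬ (v.1 ≤ u.1 ∧ u.2 ≤ v.2)) :
    ∃ (c : k) (u₂ v₂ : Fin m × Fin n),
      ((u₂.1 = u.1 ∧ v₂.1 = v.1) ∨ (u₂.1 = v.1 ∧ v₂.1 = u.1)) ∧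
      ((u₂.2 = u.2 ∧ v₂.2 = v.2) ∨ (u₂.2 = v.2 ∧ v₂.2 = u.2)) ∧
      ((if u₂.1 < v₂.1 then 1 else 0) + (if v₂.2 < u₂.2 then 1 else 0) <
        (if u.1 < v.1 then 1 else 0) + ((if v.2 < u.2 then 1 else 0) : ℕ)) ∧
      X k q m n u.1 u.2 * X k q m n v.1 v.2 -
        c • (X k q m n u₂.1 u₂.2 * X k q m n v₂.1 v₂.2) ∈ I₁ k q m n := by
  obtain ⟨a, b⟩ := u
  obtain ⟨a', b'⟩ := v
  simp only [not_and, not_le] at hbad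
  rcases lt_trichotomy a a' with h1 | h1 | h1 <;> rcases lt_trichotomy b b' with h2 | h2 | h2
  · -- a < a', b < b' : quantum minor case
    refine ⟨q, (a', b), (a, b'), Or.inr ⟨rfl, rfl⟩, Or.inl ⟨rfl, rfl⟩, ?_, ?_⟩
    · simp only [if_pos h1, if_neg (lt_asymm h1), if_neg (lt_asymm h2)]
      omega
    · have hm := minor_mem (k := k) (q := q) h1 h2
      rwa [Xcomm h1 h2] at hm
  · -- a < a', b = b' : column relation
    subst h2
    refine ⟨q, (a', b), (a, b), Or.inr ⟨rfl, rfl⟩, Or.inl ⟨rfl, rfl⟩, ?_, ?_⟩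
    · simp only [if_pos h1, if_neg (lt_asymm h1), if_neg (lt_irrefl b)]
      omega
    · rw [Xcol b h1]
      simp
  · -- a < a', b > b' : commutation
    refine ⟨1, (a', b'), (a, b), Or.inr ⟨rfl, rfl⟩, Or.inr ⟨rfl, rfl⟩, ?_, ?_⟩
    · simp only [if_pos h1, if_pos h2, if_neg (lt_asymm h1), if_neg (lt_asymm h2)]
      omega
    · rw [Xcomm h1 h2, one_smul]
      simp
  · -- a = a', b < b' : not bad
    subst h1
    exact absurd (hbad (le_refl a)) (lt_asymm h2)
  · -- a = a', b = b' : not bad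
    subst h1; subst h2
    exact absurd (hbad (le_refl a)) (lt_irrefl b)
  · -- a = a', b > b' : row relation
    subst h1
    refine ⟨q⁻¹, (a, b'), (a, b), Or.inl ⟨rfl, rfl⟩, Or.inr ⟨rfl, rfl⟩, ?_, ?_⟩
    · simp only [if_pos h2, if_neg (lt_asymm h2), if_neg (lt_irrefl a)]
      omega
    · rw [Xrow a h2, smul_smul, inv_mul_cancel₀ hq, one_smul]
      simp
  · -- a > a', b < b' : not bad
    exact absurd (hbad h1.le) (lt_asymm h2)
  · -- a > a', b = b' : not bad
    subst h2
    exact absurd (hbad h1.le) (lt_irrefl b)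
  · -- a > a', b > b' : mixed case
    refine ⟨q⁻¹, (a, b'), (a', b), Or.inl ⟨rfl, rfl⟩, Or.inr ⟨rfl, rfl⟩, ?_, ?_⟩
    · simp only [if_pos h2, if_neg (lt_asymm h1), if_neg (lt_asymm h2)]
      omega
    · have hg := minor_mem (k := k) (q := q) h1 h2
      have hmix := Xmixed (k := k) (q := q) h1 h2
      have hcm := Xcomm (k := k) (q := q) h1 h2
      -- hg : X a' b' * X a b - q • (X a' b * X a b') ∈ I₁
      -- hmix : X a' b' * X a b - X a b * X a' b' = (q - q⁻¹) • (X a' b * X a b')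
      -- hcm : X a' b * X a b' = X a b' * X a' b
      have key : X k q m n a b * X k q m n a' b' - q⁻¹ • (X k q m n a b' * X k q m n a' b) =
          X k q m n a' b' * X k q m n a b - q • (X k q m n a' b * X k q m n a b') := by
        rw [← hcm]
        have h3 : X k q m n a b * X k q m n a' b' =
            X k q m n a' b' * X k q m n a b - (q - q⁻¹) • (X k q m n a' b * X k q m n a b') := by
          rw [← hmix]; abel
        rw [h3]
        module
      rw [key]
      exact hg
end AuxRel
section AuxSpan

variable {k : Type} [Field k] {q : k} {m n : ℕ}

/-- The submodule spanned by ordered monomials together with `I₁`. -/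
def Wsub (k : Type) [Field k] (q : k) (m n : ℕ) : Submodule k (QMat k q m n) :=
  Submodule.span k
    (Set.range fun L : {L : List (Fin m × Fin n) // OrderedIdx L} => matMono k q m n L.1) ⊔
  Submodule.restrictScalars k (TwoSidedIdeal.asIdeal (I₁ k q m n))

lemma I1_le_Wsub {x : QMat k q m n} (hx : x ∈ I₁ k q m n) : x ∈ Wsub k q m n :=
  Submodule.mem_sup_right (by
    rw [Submodule.restrictScalars_mem, TwoSidedIdeal.mem_asIdeal]; exact hx)

lemma matMono_append (L M : List (Fin m × Fin n)) :
    matMono k q m n (L ++ M) = matMono k q m n L * matMono k q m n M := by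
  simp [matMono]

lemma matMono_cons (p : Fin m × Fin n) (L : List (Fin m × Fin n)) :
    matMono k q m n (p :: L) = X k q m n p.1 p.2 * matMono k q m n L := by
  simp [matMono]

lemma sandwich (P S : List (Fin m × Fin n)) (u v u₂ v₂ : Fin m × Fin n) (c : k)
    (h : X k q m n u.1 u.2 * X k q m n v.1 v.2 -
        c • (X k q m n u₂.1 u₂.2 * X k q m n v₂.1 v₂.2) ∈ I₁ k q m n) :
    matMono k q m n (P ++ u :: v :: S) - c • matMono k q m n (P ++ u₂ :: v₂ :: S) ∈
      I₁ k q m n := by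
  have e : matMono k q m n (P ++ u :: v :: S) - c • matMono k q m n (P ++ u₂ :: v₂ :: S) =
      matMono k q m n P * ((X k q m n u.1 u.2 * X k q m n v.1 v.2 -
        c • (X k q m n u₂.1 u₂.2 * X k q m n v₂.1 v₂.2)) * matMono k q m n S) := by
    rw [matMono_append, matMono_append, matMono_cons, matMono_cons, matMono_cons, matMono_cons]
    simp only [sub_mul, mul_sub, smul_mul_assoc, mul_smul_comm, mul_assoc]
  rw [e]
  exact (I₁ k q m n).mul_mem_left _ _ ((I₁ k q m n).mul_mem_right _ _ h)

lemma matMono_mem_Wsub (hq : q ≠ 0) (L : List (Fin m × Fin n)) :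
    matMono k q m n L ∈ Wsub k q m n := by
  suffices h : ∀ (N : ℕ) (L : List (Fin m × Fin n)), rowInv L + colInv L < N →
      matMono k q m n L ∈ Wsub k q m n by
    exact h (rowInv L + colInv L + 1) L (Nat.lt_succ_self _)
  intro N
  induction N with
  | zero => exact fun L h => absurd h (Nat.not_lt_zero _)
  | succ N ih =>
    intro L hL
    by_cases hord : OrderedIdx L
    · exact Submodule.mem_sup_left (Submodule.subset_span ⟨⟨L, hord⟩, rfl⟩)
    · obtain ⟨P, u, v, S, rfl, hbad⟩ := exists_bad hord
      obtain ⟨c, u₂, v₂, hr, hc, hind, hmem⟩ := step hq u v hbad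
      have hlt := mu_lt P S u v u₂ v₂ hr hc hind
      have h2 : matMono k q m n (P ++ u₂ :: v₂ :: S) ∈ Wsub k q m n := ih _ (by omega)
      have hdec : matMono k q m n (P ++ u :: v :: S) =
          (matMono k q m n (P ++ u :: v :: S) - c • matMono k q m n (P ++ u₂ :: v₂ :: S)) +
            c • matMono k q m n (P ++ u₂ :: v₂ :: S) := by abel
      rw [hdec]
      exact add_mem (I1_le_Wsub (sandwich P S u v u₂ v₂ c hmem))
        (Submodule.smul_mem _ _ h2)

lemma mem_span_all (x : QMat k q m n) :
    x ∈ Submodule.span k (Set.range (matMono k q m n)) := by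
  obtain ⟨y, rfl⟩ := RingQuot.mkAlgHom_surjective k (MatRel k q m n) x
  induction y using FreeAlgebra.induction with
  | grade0 r =>
    rw [AlgHom.commutes, Algebra.algebraMap_eq_smul_one]
    have h1 : (1 : QMat k q m n) = matMono k q m n [] := by simp [matMono]
    rw [h1]
    exact Submodule.smul_mem _ _ (Submodule.subset_span ⟨[], rfl⟩)
  | grade1 p =>
    have h1 : (RingQuot.mkAlgHom k (MatRel k q m n)) (FreeAlgebra.ι k p) =
        matMono k q m n [p] := by
      rw [matMono_cons]
      simp [matMono, X]
    rw [h1]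
    exact Submodule.subset_span ⟨[p], rfl⟩
  | mul a b ha hb =>
    rw [map_mul]
    have h1 := Submodule.mul_mem_mul ha hb
    rw [Submodule.span_mul_span] at h1
    refine Submodule.span_le.2 ?_ h1
    rintro z ⟨z1, ⟨L1, rfl⟩, z2, ⟨L2, rfl⟩, rfl⟩
    exact Submodule.subset_span ⟨L1 ++ L2, matMono_append L1 L2⟩
  | add a b ha hb =>
    rw [map_add]
    exact add_mem ha hb

lemma Wsub_top (hq : q ≠ 0) (x : QMat k q m n) : x ∈ Wsub k q m n :=
  Submodule.span_le.2 (by rintro z ⟨L, rfl⟩; exact matMono_mem_Wsub hq L) (mem_span_all x)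

end AuxSpan
set_option maxHeartbeats 1000000 in
/-- The kernel of `θ` is exactly the ideal `I₁` generated by the `2 × 2`
quantum minors. -/
theorem ker_theta_eq_I1 (k : Type) [Field k] (q : k) (hq : q ≠ 0) (m n : ℕ)
    (θ : QMat k q m n →ₐ[k] QAff k q m ⊗[k] QAff k q n)
    (hθ : ∀ (i : Fin m) (j : Fin n),
      θ (X k q m n i j) = affGen k q m i ⊗ₜ[k] affGen k q n j) :
    ∀ a : QMat k q m n, θ a = 0 ↔ a ∈ I₁ k q m n := by
  have hrev : ∀ x ∈ I₁ k q m n, θ x = 0 := by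
    intro x hx
    rw [I₁, TwoSidedIdeal.mem_span_iff] at hx
    refine (TwoSidedIdeal.mem_ker θ).1 (hx (TwoSidedIdeal.ker θ) ?_)
    rintro g ⟨i, l, j, s, hi, hj, rfl⟩
    rw [SetLike.mem_coe, TwoSidedIdeal.mem_ker]
    have hz : affGen k q n j * affGen k q n s = q • (affGen k q n s * affGen k q n j) := by
      have h' := RingQuot.mkAlgHom_rel k (AffRel.rel (k := k) (q := q) (n := n) hj)
      rw [map_mul, map_smul, map_mul] at h'
      exact h'
    rw [map_sub, map_smul, map_mul, map_mul, hθ, hθ, hθ, hθ,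
      Algebra.TensorProduct.tmul_mul_tmul, Algebra.TensorProduct.tmul_mul_tmul, hz,
      TensorProduct.tmul_smul]
    exact sub_self _
  intro a
  constructor
  · intro ha
    obtain ⟨s, hs, jj, hjj, heq⟩ := Submodule.mem_sup.1 (Wsub_top hq a)
    have hjI : jj ∈ I₁ k q m n := by
      rw [Submodule.restrictScalars_mem, TwoSidedIdeal.mem_asIdeal] at hjj
      exact hjj
    have hθs : θ s = 0 := by
      have := congrArg θ heq
      rw [map_add, ha, hrev jj hjI, add_zero] at this
      exact this
    obtain ⟨cf, hcf⟩ := Finsupp.mem_span_range_iff_exists_finsupp.1 hs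
    have hzero : Finsupp.linearCombination k
        (fun L : {L : List (Fin m × Fin n) // OrderedIdx L} => θ (matMono k q m n L.1)) cf
        = 0 := by
      rw [Finsupp.linearCombination_apply]
      rw [← hθs, ← hcf, map_finsuppSum]
      simp [map_smul]
    have hcf0 : cf = 0 :=
      linearIndependent_iffₛ.1 (indep_ordered hq θ hθ) cf 0 (by rw [hzero, map_zero])
    have hs0 : s = 0 := by
      rw [← hcf, hcf0, Finsupp.sum_zero_index]
    rw [← heq, hs0, zero_add]
    exact hjI
  · exact hrev a
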